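/- Let G be a finite group and let k be a (not necessarily finite) field whose multiplicative group k* has order at least 2|G|. Then there exists a function f : G → k such that for every field extension F of k, the Cayley evolution F-algebra Cay(f_F) — where f_F : G → F is the composition of f with the inclusion k → F — is simple, and the automorphism group Aut(Cay(f_F)) is isomorphic to G. -/

import Mathlib

open scoped BigOperators

variable {k : Type*} [Field k] {G : Type*} [Group G] [Fintype G] [DecidableEq G]

/-- The Cayley evolution product on the group algebra `k[G]` (realized as `G → k`):
it is the `k`-bilinear product with `δ_g · δ_g = ∑ h, f (g⁻¹ * h) • δ_h` and
`δ_g · δ_{g'} = 0` for `g ≠ g'`. -/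
def cayMul (f : G → k) (x y : G → k) : G → k :=
  fun h => ∑ g : G, x g * y g * f (g⁻¹ * h)

/-- The automorphism group of the Cayley evolution algebra `Cay(f)`: the `k`-linear
bijections of `k[G]` preserving the Cayley evolution product. -/
def cayAut (f : G → k) : Subgroup ((G → k) ≃ₗ[k] (G → k)) where
  carrier := {φ | ∀ x y, φ (cayMul f x y) = cayMul f (φ x) (φ y)}
  one_mem' := fun _ _ => rfl
  mul_mem' := by
    intro a b ha hb x y
    replace ha : ∀ x y, a (cayMul f x y) = cayMul f (a x) (a y) := ha
    replace hb : ∀ x y, b (cayMul f x y) = cayMul f (b x) (b y) := hb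
    show a (b (cayMul f x y)) = cayMul f (a (b x)) (a (b y))
    rw [hb, ha]
  inv_mem' := by
    intro a ha x y
    replace ha : ∀ x y, a (cayMul f x y) = cayMul f (a x) (a y) := ha
    show a.symm (cayMul f x y) = cayMul f (a.symm x) (a.symm y)
    apply a.injective
    rw [ha, a.apply_symm_apply, a.apply_symm_apply, a.apply_symm_apply]

/-- `Cay(f)` is simple: the product is not identically zero and the only ideals
(`k`-subspaces `I` with `k[G] · I ⊆ I`) are `0` and `k[G]`. -/
def CaySimple (f : G → k) : Prop :=
  (∃ x y : G → k, cayMul f x y ≠ 0) ∧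
  ∀ I : Submodule k (G → k), (∀ x y : G → k, y ∈ I → cayMul f x y ∈ I) → I = ⊥ ∨ I = ⊤

/-- The structure matrix of `Cay(f)`: its `(h, g)` entry is `f (g⁻¹ * h)`. -/
def structMatrix (f : G → k) : Matrix G G k := Matrix.of fun h g => f (g⁻¹ * h)

set_option linter.unusedSectionVars false

lemma cayMul_comm (f : G → k) (x y : G → k) : cayMul f x y = cayMul f y x := by
  funext h
  exact Finset.sum_congr rfl fun g _ => by ring

lemma cayMul_smul_left (f : G → k) (a : k) (x y : G → k) :
    cayMul f (a • x) y = a • cayMul f x y := by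
  funext h
  simp only [cayMul, Pi.smul_apply, smul_eq_mul, Finset.mul_sum]
  exact Finset.sum_congr rfl fun g _ => by ring

lemma cayMul_eq_mulVec (f : G → k) (x y : G → k) :
    cayMul f x y = (structMatrix f).mulVec (x * y) := by
  funext h
  simp only [cayMul, structMatrix, Matrix.mulVec, dotProduct, Matrix.of_apply,
    Pi.mul_apply]
  exact Finset.sum_congr rfl fun g _ => by ring

lemma cayMul_single (f : G → k) (g : G) (y : G → k) :
    cayMul f (Pi.single g 1) y = y g • fun h => f (g⁻¹ * h) := by
  funext h
  simp only [cayMul, Pi.smul_apply, smul_eq_mul]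
  rw [Finset.sum_eq_single g]
  · rw [Pi.single_eq_same]; ring
  · intro b _ hb
    rw [Pi.single_eq_of_ne hb]; ring
  · intro hg; exact absurd (Finset.mem_univ g) hg

lemma cayMul_eq_zero_iff {f : G → k} (hdet : (structMatrix f).det ≠ 0) {x y : G → k} :
    cayMul f x y = 0 ↔ x * y = 0 := by
  have : Invertible (structMatrix f) :=
    (structMatrix f).invertibleOfIsUnitDet (isUnit_iff_ne_zero.2 hdet)
  rw [cayMul_eq_mulVec]
  constructor
  · intro h
    have h2 : (⅟(structMatrix f)).mulVec ((structMatrix f).mulVec (x * y)) = 0 := by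
      rw [h, Matrix.mulVec_zero]
    rwa [Matrix.mulVec_mulVec, invOf_mul_self, Matrix.one_mulVec] at h2
  · intro h; rw [h, Matrix.mulVec_zero]

set_option linter.unusedSectionVars false

lemma caySimple_of {f : G → k} (hf0 : ∀ g, f g ≠ 0)
    (hdet : (structMatrix f).det ≠ 0) : CaySimple f := by
  constructor
  · refine ⟨Pi.single 1 1, Pi.single 1 1, fun h => ?_⟩
    have := congrFun h 1
    rw [cayMul_single] at this
    simp only [Pi.single_eq_same, Pi.zero_apply, one_smul] at this
    exact hf0 1 (by simpa using this)
  · intro I hI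
    by_cases hbot : I = ⊥
    · exact Or.inl hbot
    right
    obtain ⟨y, hyI, hy0⟩ := Submodule.exists_mem_ne_zero_of_ne_bot hbot
    obtain ⟨g0, hg0⟩ : ∃ g, y g ≠ 0 := Function.ne_iff.mp hy0
    -- the column c g0 lies in I
    have hcol : ∀ g : G, (fun h => f (g⁻¹ * h)) ∈ I := by
      have hc0 : (fun h => f (g0⁻¹ * h)) ∈ I := by
        have h1 : cayMul f (Pi.single g0 1) y ∈ I := hI _ _ hyI
        rw [cayMul_single] at h1
        have := I.smul_mem (y g0)⁻¹ h1
        rwa [smul_smul, inv_mul_cancel₀ hg0, one_smul] at this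
      intro g
      have h1 : cayMul f (Pi.single g 1) (fun h => f (g0⁻¹ * h)) ∈ I := hI _ _ hc0
      rw [cayMul_single] at h1
      have := I.smul_mem (f (g0⁻¹ * g))⁻¹ h1
      rwa [smul_smul, inv_mul_cancel₀ (hf0 _), one_smul] at this
    rw [Submodule.eq_top_iff']
    intro x
    have : Invertible (structMatrix f) :=
      (structMatrix f).invertibleOfIsUnitDet (isUnit_iff_ne_zero.2 hdet)
    have hx : x = (structMatrix f).mulVec ((⅟(structMatrix f)).mulVec x) := by
      rw [Matrix.mulVec_mulVec, mul_invOf_self, Matrix.one_mulVec]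
    set v := (⅟(structMatrix f)).mulVec x with hv
    have hsum : (structMatrix f).mulVec v = ∑ g : G, v g • (fun h => f (g⁻¹ * h)) := by
      funext h
      simp only [Matrix.mulVec, dotProduct, structMatrix, Matrix.of_apply,
        Finset.sum_apply, Pi.smul_apply, smul_eq_mul]
      exact Finset.sum_congr rfl fun g _ => by ring
    rw [hx, hsum]
    exact Submodule.sum_mem I fun g _ => I.smul_mem _ (hcol g)

/-- Left translation by `t` as a linear automorphism of `G → k`. -/
def transl (k : Type*) [Field k] {G : Type*} [Group G] (t : G) :
    (G → k) ≃ₗ[k] (G → k) where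
  toFun x := fun h => x (t⁻¹ * h)
  invFun x := fun h => x (t * h)
  map_add' _ _ := rfl
  map_smul' _ _ := rfl
  left_inv x := funext fun h => congrArg x (inv_mul_cancel_left t h)
  right_inv x := funext fun h => congrArg x (mul_inv_cancel_left t h)

lemma transl_apply (t : G) (x : G → k) (h : G) : transl k t x h = x (t⁻¹ * h) := rfl

lemma transl_mem (f : G → k) (t : G) : transl k t ∈ cayAut f := by
  intro x y
  funext h
  show (cayMul f x y) (t⁻¹ * h) = _
  simp only [cayMul, transl_apply]
  refine Fintype.sum_equiv (Equiv.mulLeft t) _ _ fun g => ?_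
  simp only [Equiv.coe_mulLeft]
  rw [inv_mul_cancel_left, mul_inv_rev, mul_assoc g⁻¹ t⁻¹ h]

lemma transl_single (t g : G) : transl k t (Pi.single g 1) = Pi.single (t * g) 1 := by
  funext h
  rw [transl_apply]
  by_cases hh : h = t * g
  · subst hh; rw [Pi.single_eq_same, inv_mul_cancel_left, Pi.single_eq_same]
  · rw [Pi.single_eq_of_ne hh, Pi.single_eq_of_ne]
    intro hc
    exact hh (by rw [← hc, mul_inv_cancel_left])

lemma eq_sum_single (x : G → k) : x = ∑ g : G, x g • (Pi.single g 1 : G → k) := by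
  conv_lhs => rw [← Finset.univ_sum_single x]
  refine Finset.sum_congr rfl fun g _ => ?_
  rw [← Pi.single_smul, smul_eq_mul, mul_one]

lemma aut_eq_transl {f : G → k} (hf0 : ∀ g, f g ≠ 0) (hinj : Function.Injective f)
    (hdet : (structMatrix f).det ≠ 0)
    (φ : (G → k) ≃ₗ[k] (G → k))
    (hφ : ∀ x y, φ (cayMul f x y) = cayMul f (φ x) (φ y)) :
    ∃ s : G, φ = transl k s := by
  have step1 : ∀ g : G, ∃ (a : G) (b : k), b ≠ 0 ∧ φ (Pi.single g 1) = b • (Pi.single a 1 : G → k) := by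
    intro g
    set v := φ (Pi.single g 1) with hv
    have hvne : v ≠ 0 := by
      rw [hv, Ne, LinearEquiv.map_eq_zero_iff]
      intro h
      have := congrFun h g
      rw [Pi.single_eq_same] at this
      exact one_ne_zero this
    have key : ∀ w : G → k, ∃ c : k, ∀ h, v h * (w h - c * v h) = 0 := by
      intro w
      refine ⟨φ.symm w g, fun h => ?_⟩
      have hz : cayMul f (Pi.single g 1) (φ.symm w - φ.symm w g • (Pi.single g 1 : G → k)) = 0 := by
        rw [cayMul_single]
        simp [Pi.single_eq_same]
      have hz2 := hφ (Pi.single g 1) (φ.symm w - φ.symm w g • (Pi.single g 1 : G → k))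
      rw [hz, map_zero] at hz2
      rw [map_sub, map_smul, φ.apply_symm_apply] at hz2
      have hz3 := (cayMul_eq_zero_iff hdet).mp hz2.symm
      have := congrFun hz3 h
      simpa using this
    have huniq : ∀ a b : G, v a ≠ 0 → v b ≠ 0 → a = b := by
      intro a b ha hb
      by_contra hab
      obtain ⟨c, hc⟩ := key (Pi.single a 1)
      have h1 := hc a
      rw [Pi.single_eq_same] at h1
      have h2 := hc b
      rw [Pi.single_eq_of_ne (Ne.symm hab)] at h2
      have hc0 : c = 0 := by
        rcases mul_eq_zero.mp h2 with h | h
        · exact absurd h hb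
        · rw [zero_sub, neg_eq_zero] at h
          rcases mul_eq_zero.mp h with h' | h'
          · exact h'
          · exact absurd h' hb
      rw [hc0, zero_mul, sub_zero, mul_one] at h1
      exact ha h1
    obtain ⟨a, ha⟩ := Function.ne_iff.mp hvne
    refine ⟨a, v a, by simpa using ha, ?_⟩
    funext h
    by_cases hh : h = a
    · subst hh
      rw [Pi.smul_apply, Pi.single_eq_same, smul_eq_mul, mul_one]
    · have hz : v h = 0 := by
        by_contra hvh
        exact hh (huniq h a hvh (by simpa using ha))
      rw [hz, Pi.smul_apply, Pi.single_eq_of_ne hh, smul_zero]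
  choose t μ hμ hϕ using step1
  -- injectivity of t
  have tinj : Function.Injective t := by
    intro g g' he
    by_contra hne
    have h1 : φ (μ g' • (Pi.single g 1 : G → k)) = φ (μ g • (Pi.single g' 1 : G → k)) := by
      rw [map_smul, map_smul, hϕ, hϕ, he, smul_comm]
    have h2 := φ.injective h1
    have h3 := congrFun h2 g
    rw [Pi.smul_apply, Pi.smul_apply, Pi.single_eq_same, Pi.single_eq_of_ne hne] at h3
    rw [smul_eq_mul, smul_eq_mul, mul_one, mul_zero] at h3
    exact hμ g' h3
  -- the functional equation
  have hE : ∀ g h : G, f (g⁻¹ * h) * μ h = μ g * μ g * f ((t g)⁻¹ * t h) := by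
    intro g h0
    have base := hφ (Pi.single g 1) (Pi.single g 1)
    rw [cayMul_single, Pi.single_eq_same, one_smul, hϕ g] at base
    rw [cayMul_smul_left, cayMul_comm, cayMul_smul_left, cayMul_single] at base
    rw [Pi.single_eq_same, one_smul] at base
    have expand : (fun p => f (g⁻¹ * p)) = ∑ h : G, f (g⁻¹ * h) • (Pi.single h 1 : G → k) := by
      rw [← eq_sum_single]
    rw [expand, map_sum] at base
    simp_rw [map_smul, hϕ] at base
    have hb := congrFun base (t h0)
    rw [Finset.sum_apply] at hb
    rw [Finset.sum_eq_single h0] at hb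
    · simp only [Pi.smul_apply, Pi.single_eq_same, smul_eq_mul, mul_one] at hb
      rw [hb]
      ring
    · intro b _ hb0
      have : t h0 ≠ t b := fun hc => hb0 (tinj hc.symm)
      rw [Pi.smul_apply, Pi.smul_apply, Pi.single_eq_of_ne this, smul_zero, smul_zero]
    · intro hg; exact absurd (Finset.mem_univ h0) hg
  -- μ = 1
  have hμ1 : ∀ g, μ g = 1 := by
    intro g
    have h1 := hE g g
    rw [inv_mul_cancel, inv_mul_cancel, mul_comm (f 1) (μ g)] at h1
    have h2 : μ g = μ g * μ g := mul_right_cancel₀ (hf0 1) h1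
    have := mul_left_cancel₀ (hμ g) (by rw [← h2, mul_one] : μ g * 1 = μ g * μ g)
    exact this.symm
  -- t is a translation
  have hE' : ∀ g h : G, (t g)⁻¹ * t h = g⁻¹ * h := by
    intro g h
    apply hinj
    have h1 := hE g h
    rw [hμ1, hμ1, mul_one, one_mul, one_mul] at h1
    exact h1.symm
  have ht : ∀ h, t h = t 1 * h := by
    intro h
    have h2 := hE' 1 h
    rw [inv_one, one_mul] at h2
    conv_rhs => rw [← h2, mul_inv_cancel_left]
  refine ⟨t 1, LinearEquiv.ext fun x => ?_⟩
  conv_lhs => rw [eq_sum_single x]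
  rw [map_sum]
  simp_rw [map_smul, hϕ, hμ1, one_smul]
  funext h
  rw [Finset.sum_apply, transl_apply]
  rw [Finset.sum_eq_single ((t 1)⁻¹ * h)]
  · rw [Pi.smul_apply, ht ((t 1)⁻¹ * h), mul_inv_cancel_left, Pi.single_eq_same,
      smul_eq_mul, mul_one]
  · intro b _ hb0
    have hne : h ≠ t b := by
      intro hc
      exact hb0 (by rw [hc, ht b, inv_mul_cancel_left])
    rw [Pi.smul_apply, Pi.single_eq_of_ne hne, smul_zero]
  · intro hg; exact absurd (Finset.mem_univ _) hg

lemma cayKey {f : G → k} (hf0 : ∀ g, f g ≠ 0) (hinj : Function.Injective f)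
    (hdet : (structMatrix f).det ≠ 0) :
    CaySimple f ∧ Nonempty (↥(cayAut f) ≃* G) := by
  refine ⟨caySimple_of hf0 hdet, ?_⟩
  have hmul : ∀ t s : G, transl k (t * s) = transl k t * transl k s := by
    intro t s
    apply LinearEquiv.ext
    intro x
    funext h
    show x ((t * s)⁻¹ * h) = x (s⁻¹ * (t⁻¹ * h))
    rw [mul_inv_rev, mul_assoc]
  let Ψ : G →* ↥(cayAut f) :=
  { toFun := fun t => ⟨transl k t, transl_mem f t⟩
    map_one' := by
      apply Subtype.ext
      apply LinearEquiv.ext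
      intro x
      funext h
      show x (1⁻¹ * h) = x h
      rw [inv_one, one_mul]
    map_mul' := fun t s => Subtype.ext (hmul t s) }
  have hΨinj : Function.Injective Ψ := by
    intro t s h
    have h1 : transl k t = transl k s := congrArg Subtype.val h
    have h2 := congrArg (fun (e : (G → k) ≃ₗ[k] (G → k)) => e (Pi.single 1 1)) h1
    rw [transl_single, transl_single, mul_one, mul_one] at h2
    by_contra hne
    have h3 := congrFun h2 t
    rw [Pi.single_eq_same, Pi.single_eq_of_ne hne] at h3
    exact one_ne_zero h3
  have hΨsurj : Function.Surjective Ψ := by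
    rintro ⟨φ, hφmem⟩
    replace hφmem : ∀ x y, φ (cayMul f x y) = cayMul f (φ x) (φ y) := hφmem
    obtain ⟨s, rfl⟩ := aut_eq_transl hf0 hinj hdet φ hφmem
    exact ⟨s, rfl⟩
  exact ⟨(MulEquiv.ofBijective Ψ ⟨hΨinj, hΨsurj⟩).symm⟩

lemma exists_good_f (hk : 2 * (Fintype.card G : Cardinal) ≤ Cardinal.mk kˣ) :
    ∃ f : G → k, (∀ g, f g ≠ 0) ∧ Function.Injective f ∧ (structMatrix f).det ≠ 0 := by
  classical
  obtain ⟨ι⟩ : Nonempty (G ↪ kˣ) := by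
    rcases finite_or_infinite kˣ with hfin | hinf
    · have : Fintype kˣ := Fintype.ofFinite kˣ
      refine Function.Embedding.nonempty_of_card_le ?_
      have h1 : (Fintype.card G : Cardinal) ≤ (Fintype.card kˣ : Cardinal) := by
        calc (Fintype.card G : Cardinal) ≤ 2 * Fintype.card G := by
              rw [two_mul]; exact le_self_add
        _ ≤ Cardinal.mk kˣ := hk
        _ = Fintype.card kˣ := Cardinal.mk_fintype kˣ
      exact_mod_cast h1
    · exact ⟨((Fintype.equivFin G).toEmbedding.trans Fin.valEmbedding).trans
        (Infinite.natEmbedding kˣ)⟩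
  set n := Fintype.card G with hn
  have hn1 : 1 ≤ n := Fintype.card_pos
  set Mp : Matrix G G (Polynomial k) := Matrix.of fun h g =>
    if h = g then 1 else Polynomial.C (ι (g⁻¹ * h) : k) * Polynomial.X with hMp
  set q : Polynomial k := Mp.det with hq
  have hq0 : q.eval 0 = 1 := by
    have h1 : (Polynomial.evalRingHom (0:k)) q
        = ((Polynomial.evalRingHom (0:k)).mapMatrix Mp).det := RingHom.map_det _ _
    have h2 : (Polynomial.evalRingHom (0:k)).mapMatrix Mp = 1 := by
      ext h g
      by_cases hh : h = g
      · subst hh; simp [hMp, Matrix.one_apply]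
      · simp [hMp, Matrix.one_apply, hh]
    rw [h2, Matrix.det_one] at h1
    exact h1
  have hqne : q ≠ 0 := fun h => by simp [h] at hq0
  have hdegq : q.natDegree ≤ n := by
    rw [hq, Matrix.det_apply]
    refine Polynomial.natDegree_sum_le_of_forall_le _ _ fun σ _ => ?_
    rw [Units.smul_def, zsmul_eq_mul]
    refine le_trans (Polynomial.natDegree_mul_le) ?_
    rw [Polynomial.natDegree_intCast, zero_add]
    refine le_trans (Polynomial.natDegree_prod_le _ _) ?_
    have hb : ∀ g : G, (Mp (σ g) g).natDegree ≤ 1 := by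
      intro g
      by_cases hh : σ g = g
      · simp [hMp, hh]
      · simp only [hMp, Matrix.of_apply, if_neg hh]
        refine le_trans (Polynomial.natDegree_mul_le) ?_
        simp [Polynomial.natDegree_C, Polynomial.natDegree_X_le]
    calc ∑ g : G, (Mp (σ g) g).natDegree ≤ ∑ _g : G, 1 := Finset.sum_le_sum fun g _ => hb g
    _ = n := by simp [hn]
  -- bad set
  set T : Finset k := q.roots.toFinset ∪
    (Finset.univ.erase (1 : G)).image (fun g => (((ι g)⁻¹ : kˣ) : k)) with hT
  have hTcard : T.card ≤ n + (n - 1) := by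
    refine le_trans (Finset.card_union_le _ _) (add_le_add ?_ ?_)
    · exact le_trans (Multiset.toFinset_card_le _)
        (le_trans (Polynomial.card_roots' q) hdegq)
    · refine le_trans Finset.card_image_le ?_
      rw [Finset.card_erase_of_mem (Finset.mem_univ _), Finset.card_univ]
  obtain ⟨u, hu⟩ : ∃ u : kˣ, (u : k) ∉ T := by
    by_contra hcon
    push_neg at hcon
    have hinj2 : Function.Injective (fun u : kˣ => (⟨(u : k), hcon u⟩ : T)) := by
      intro a b hab
      exact Units.ext (congrArg Subtype.val hab)
    have hle : Cardinal.mk kˣ ≤ (T.card : Cardinal) := by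
      calc Cardinal.mk kˣ ≤ Cardinal.mk T := Cardinal.mk_le_of_injective hinj2
      _ = T.card := Cardinal.mk_coe_finset
    have h2n' : 2 * n ≤ T.card := by exact_mod_cast le_trans hk hle
    omega
  refine ⟨fun g => if g = 1 then 1 else ((ι g : kˣ) : k) * u, ?_, ?_, ?_⟩
  · intro g
    by_cases hg : g = 1
    · simp [hg]
    · simp only [if_neg hg]
      exact mul_ne_zero (Units.ne_zero _) (Units.ne_zero _)
  · intro a b hab
    simp only at hab
    by_cases ha : a = 1 <;> by_cases hb : b = 1
    · rw [ha, hb]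
    · rw [if_pos ha, if_neg hb] at hab
      exfalso
      apply hu
      rw [hT]
      refine Finset.mem_union_right _ (Finset.mem_image.mpr ⟨b, Finset.mem_erase.mpr ⟨hb, Finset.mem_univ _⟩, ?_⟩)
      rw [Units.val_inv_eq_inv_val]
      exact (eq_inv_of_mul_eq_one_right hab.symm).symm
    · rw [if_neg ha, if_pos hb] at hab
      exfalso
      apply hu
      rw [hT]
      refine Finset.mem_union_right _ (Finset.mem_image.mpr ⟨a, Finset.mem_erase.mpr ⟨ha, Finset.mem_univ _⟩, ?_⟩)
      rw [Units.val_inv_eq_inv_val]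
      exact (eq_inv_of_mul_eq_one_right hab).symm
    · rw [if_neg ha, if_neg hb] at hab
      have h1 : ((ι a : kˣ) : k) = ((ι b : kˣ) : k) :=
        mul_right_cancel₀ (Units.ne_zero u) hab
      exact ι.injective (Units.ext h1)
  · -- determinant
    have hmap : (Polynomial.evalRingHom ((u : k))).mapMatrix Mp
        = structMatrix (fun g => if g = 1 then 1 else ((ι g : kˣ) : k) * (u : k)) := by
      ext h g
      by_cases hh : h = g
      · subst hh
        simp [hMp, structMatrix]
      · have hne : ¬ (g⁻¹ * h = 1) := by
          rw [inv_mul_eq_one]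
          exact fun hc => hh hc.symm
        simp [hMp, structMatrix, hh, hne]
    have hdet : (structMatrix (fun g => if g = 1 then 1 else ((ι g : kˣ) : k) * (u : k))).det
        = q.eval (u : k) := by
      rw [← hmap, ← RingHom.map_det]
      rfl
    rw [hdet]
    intro hc
    apply hu
    rw [hT]
    refine Finset.mem_union_left _ (Multiset.mem_toFinset.mpr ?_)
    exact Polynomial.mem_roots'.mpr ⟨hqne, hc⟩


universe w

/-- If `G` is a finite group and `k` a field with `|kˣ| ≥ 2|G|`, then there
is a function `f : G → k` such that for every field extension `F/k`, the Cayley evolution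
`F`-algebra `Cay(f_F)` (where `f_F` is `f` composed with the inclusion `k → F`) is simple
and `Aut(Cay(f_F)) ≅ G`. -/
theorem cayley_realization_absolute {G : Type*} [Group G] [Fintype G] [DecidableEq G]
    {k : Type*} [Field k]
    (hk : 2 * (Fintype.card G : Cardinal) ≤ Cardinal.mk kˣ) :
    ∃ f : G → k, ∀ (F : Type w) [Field F] [Algebra k F],
      CaySimple (fun g => algebraMap k F (f g)) ∧
      Nonempty (↥(cayAut (fun g => algebraMap k F (f g))) ≃* G) := by
  obtain ⟨f, hf0, hinj, hdet⟩ := exists_good_f hk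
  refine ⟨f, ?_⟩
  intro F _ _
  have halg : Function.Injective (algebraMap k F) := (algebraMap k F).injective
  have h0 : ∀ g, algebraMap k F (f g) ≠ 0 :=
    fun g hc => hf0 g (halg (by rw [hc, map_zero]))
  have hi : Function.Injective (fun g => algebraMap k F (f g)) :=
    fun a b hab => hinj (halg hab)
  have hd : (structMatrix (fun g => algebraMap k F (f g))).det ≠ 0 := by
    have hm : structMatrix (fun g => algebraMap k F (f g))
        = (algebraMap k F).mapMatrix (structMatrix f) := by
      ext h g; rfl
    rw [hm, ← RingHom.map_det]
    intro hc
    exact hdet (halg (by rw [hc, map_zero]))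
  exact cayKey h0 hi hd
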